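/- arXiv:2111.01329 — 2 statements merged into one kernel-verified Lean document; each statement's English description precedes it below -/
import Mathlib

section
/- Let r < 0 and C_u > 0. Let z : ℝ → ℝ be differentiable and u : ℝ → ℝ satisfy z′(t) = −r·z(t) + u(t) and |u(t)| ≤ C_u for all t ≥ 0. If |z(0)| > C_u/(−r), then |z(t)| ≥ |z(0)| for all t ≥ 0; in particular the trajectory never enters the ball of radius C_u/(−r) and its magnitude does not decay. -/
/-- For `r < 0`, `C_u > 0`: any trajectory of `ż(t) = -r·z(t) + u(t)` with
`|u(t)| ≤ C_u` that starts with `|z(0)| > C_u/(-r)` satisfies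
`|z(t)| ≥ |z(0)|` for all `t ≥ 0`. -/
theorem scalar_constrained_no_decay (r Cu : ℝ) (hr : r < 0) (hCu : 0 < Cu)
    (z u : ℝ → ℝ) (hz : Differentiable ℝ z)
    (hode : ∀ t : ℝ, 0 ≤ t → deriv z t = -r * z t + u t)
    (hu : ∀ t : ℝ, 0 ≤ t → |u t| ≤ Cu)
    (h0 : Cu / (-r) < |z 0|) :
    ∀ t : ℝ, 0 ≤ t → |z 0| ≤ |z t| := by
  have hrne : r ≠ 0 := ne_of_lt hr
  -- derivative of F s = exp(r s) * z s
  have hF : ∀ t : ℝ, HasDerivAt (fun s => Real.exp (r * s) * z s)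
      ((Real.exp (r * t) * r) * z t + Real.exp (r * t) * deriv z t) t := by
    intro t
    have h1 : HasDerivAt (fun s : ℝ => Real.exp (r * s)) (Real.exp (r * t) * r) t := by
      simpa using ((hasDerivAt_id t).const_mul r).exp
    exact h1.mul (hz t).hasDerivAt
  have hG : ∀ t : ℝ, HasDerivAt (fun s => (Cu / r) * Real.exp (r * s))
      (Cu * Real.exp (r * t)) t := by
    intro t
    have h1 : HasDerivAt (fun s : ℝ => Real.exp (r * s)) (Real.exp (r * t) * r) t := by
      simpa using ((hasDerivAt_id t).const_mul r).exp
    have := h1.const_mul (Cu / r)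
    refine this.congr_deriv ?_
    rw [mul_comm (Real.exp (r * t)) r, ← mul_assoc, div_mul_cancel₀ Cu hrne]
  set F : ℝ → ℝ := fun s => Real.exp (r * s) * z s with hFdef
  set G : ℝ → ℝ := fun s => (Cu / r) * Real.exp (r * s) with hGdef
  -- F - G antitone on Ici 0
  have hA : AntitoneOn (fun s => F s - G s) (Set.Ici (0:ℝ)) := by
    apply antitoneOn_of_deriv_nonpos (convex_Ici 0)
    · exact (Continuous.continuousOn ((Real.continuous_exp.comp (continuous_const.mul continuous_id)).mul hz.continuous : Continuous F)).sub
        (Continuous.continuousOn (continuous_const.mul (Real.continuous_exp.comp (continuous_const.mul continuous_id)) : Continuous G))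
    · intro t ht
      exact ((hF t).sub (hG t)).differentiableAt.differentiableWithinAt
    · intro t ht
      rw [interior_Ici] at ht
      have ht' : (0:ℝ) ≤ t := le_of_lt ht
      rw [HasDerivAt.deriv (f := fun s => F s - G s) ((hF t).sub (hG t)), hode t ht']
      have hub := hu t ht'
      have h2 : u t ≤ Cu := (abs_le.mp hub).2
      have hE : (0:ℝ) < Real.exp (r * t) := Real.exp_pos _
      nlinarith [hE, h2]
  -- F + G monotone on Ici 0
  have hB : MonotoneOn (fun s => F s + G s) (Set.Ici (0:ℝ)) := by
    apply monotoneOn_of_deriv_nonneg (convex_Ici 0)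
    · exact (Continuous.continuousOn ((Real.continuous_exp.comp (continuous_const.mul continuous_id)).mul hz.continuous : Continuous F)).add
        (Continuous.continuousOn (continuous_const.mul (Real.continuous_exp.comp (continuous_const.mul continuous_id)) : Continuous G))
    · intro t ht
      exact ((hF t).add (hG t)).differentiableAt.differentiableWithinAt
    · intro t ht
      rw [interior_Ici] at ht
      have ht' : (0:ℝ) ≤ t := le_of_lt ht
      rw [HasDerivAt.deriv (f := fun s => F s + G s) ((hF t).add (hG t)), hode t ht']
      have hub := hu t ht'
      have h2 : -Cu ≤ u t := (abs_le.mp hub).1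
      have hE : (0:ℝ) < Real.exp (r * t) := Real.exp_pos _
      nlinarith [hE, h2]
  intro t ht
  have h1 : F t - G t ≤ F 0 - G 0 := hA Set.self_mem_Ici ht ht
  have h2 : F 0 + G 0 ≤ F t + G t := hB Set.self_mem_Ici ht ht
  have hE : (0:ℝ) < Real.exp (r * t) := Real.exp_pos _
  have hEle : Real.exp (r * t) ≤ 1 := by
    have : r * t ≤ 0 := mul_nonpos_of_nonpos_of_nonneg (le_of_lt hr) ht
    exact Real.exp_le_one_iff.mpr this
  have hF0 : F 0 = z 0 := by simp [hFdef]
  have hG0 : G 0 = Cu / r := by simp [hGdef]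
  have hFt : F t = Real.exp (r * t) * z t := rfl
  have hGt : G t = (Cu / r) * Real.exp (r * t) := rfl
  -- so |F t - F 0| ≤ (Cu/r)(e^{rt} - 1), a nonneg quantity
  have hc : Cu / (-r) = -(Cu / r) := div_neg Cu
  rw [hc] at h0
  -- Work with |z 0| and |z t| via cases on sign is avoided: bound e^{rt}|z t| = |F t|
  have hFtabs : |F t| = Real.exp (r * t) * |z t| := by
    rw [hFt, abs_mul, abs_of_pos hE]
  have hlow : |z 0| - (Cu / r) * (Real.exp (r * t) - 1) ≤ |F t| := by
    have hd1 : F t - F 0 ≤ (Cu / r) * (Real.exp (r * t) - 1) := by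
      rw [hF0] at h1 ⊢; rw [hG0] at h1; rw [hGt] at h1; linarith [h1]
    have hd2 : -((Cu / r) * (Real.exp (r * t) - 1)) ≤ F t - F 0 := by
      rw [hF0] at h2 ⊢; rw [hG0] at h2; rw [hGt] at h2; linarith [h2]
    have : |F t - F 0| ≤ (Cu / r) * (Real.exp (r * t) - 1) := abs_le.mpr ⟨hd2, hd1⟩
    have h3 : |F 0| - |F t - F 0| ≤ |F t| := by
      have := abs_sub_abs_le_abs_sub (F 0) (F t)
      have h4 : |F 0 - F t| = |F t - F 0| := abs_sub_comm _ _
      linarith [this, h4.le]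
    rw [hF0] at h3 this
    linarith
  rw [hFtabs] at hlow
  -- now: e^{rt} |z t| ≥ |z 0| - (Cu/r)(e^{rt}-1), with -(Cu/r) < |z 0|, e^{rt} ≤ 1
  nlinarith [hlow, h0, hEle, hE, abs_nonneg (z t),
    mul_nonneg (sub_nonneg.mpr hEle) (by linarith : (0:ℝ) ≤ |z 0| + Cu / r)]
end

section
/- Let μ > 0 and let x : ℝ → ℝ be differentiable with x(t) ≥ 0 for all t ≥ 0, x(0) = x₀ > 0, and x′(t) ≤ −2μ·x(t)^(3/2) for all t ≥ 0. Then x(t) ≤ x₀ / (1 + μ·√x₀·t)² for all t ≥ 0. In particular x(t) ≤ (μ·t)^(−2) for all t > 0. -/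
open Filter Set Topology

/-- rpow computation: `(a/D²)^(3/2) = a·√a / D³` for `0 < a`, `0 < D`. -/
lemma phi_rpow_aux (a D : ℝ) (ha : 0 < a) (hD : 0 < D) :
    (a / D ^ 2) ^ ((3 : ℝ) / 2) = a * Real.sqrt a / D ^ 3 := by
  rw [Real.div_rpow ha.le (by positivity)]
  congr 1
  · rw [show ((3 : ℝ) / 2) = 1 + 1 / 2 by norm_num, Real.rpow_add ha,
      Real.rpow_one, Real.sqrt_eq_rpow]
  · rw [← Real.rpow_natCast D 2, ← Real.rpow_mul hD.le, ← Real.rpow_natCast D 3]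
    norm_num

/-- If `x : ℝ → ℝ` is differentiable, nonnegative on `[0,∞)`, with `x 0 = x₀ > 0`
and `x′(t) ≤ -2μ·x(t)^(3/2)` for `t ≥ 0` (`μ > 0`), then
`x(t) ≤ x₀/(1 + μ√x₀·t)²` for all `t ≥ 0`; in particular `x(t) ≤ (μt)⁻²` for `t > 0`. -/
theorem algebraic_decay (μ x₀ : ℝ) (hμ : 0 < μ) (hx₀ : 0 < x₀)
    (x : ℝ → ℝ) (hx : Differentiable ℝ x)
    (hpos : ∀ t : ℝ, 0 ≤ t → 0 ≤ x t) (h0 : x 0 = x₀)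
    (hdec : ∀ t : ℝ, 0 ≤ t → deriv x t ≤ -2 * μ * x t ^ ((3 : ℝ) / 2)) :
    (∀ t : ℝ, 0 ≤ t → x t ≤ x₀ / (1 + μ * Real.sqrt x₀ * t) ^ 2) ∧
    (∀ t : ℝ, 0 < t → x t ≤ (μ * t) ^ (-2 : ℝ)) := by
  -- Key strict comparison with a slightly larger/slower barrier.
  have key : ∀ a m : ℝ, x₀ < a → 0 < m → m < μ →
      ∀ t : ℝ, 0 ≤ t → x t < a / (1 + m * Real.sqrt a * t) ^ 2 := by
    intro a m hax hm hmμ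
    have ha : 0 < a := hx₀.trans hax
    have hsa : 0 < Real.sqrt a := Real.sqrt_pos.mpr ha
    set φ : ℝ → ℝ := fun t => a / (1 + m * Real.sqrt a * t) ^ 2 with hφ
    have hD : ∀ t : ℝ, 0 ≤ t → 0 < 1 + m * Real.sqrt a * t := by
      intro t ht
      have := mul_nonneg (mul_nonneg hm.le hsa.le) ht
      linarith
    by_contra hcon
    push_neg at hcon
    obtain ⟨t₁, ht₁, ht₁'⟩ := hcon
    set S : Set ℝ := {t | 0 ≤ t ∧ φ t ≤ x t} with hS
    have hSne : S.Nonempty := ⟨t₁, ht₁, ht₁'⟩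
    have hSbdd : BddBelow S := ⟨0, fun t ht => ht.1⟩
    set T : ℝ := sInf S with hT
    obtain ⟨u, -, hu_tendsto, hu_mem⟩ := exists_seq_tendsto_sInf hSne hSbdd
    have hT0 : 0 ≤ T := le_csInf hSne fun t ht => ht.1
    -- continuity/differentiability of φ at T
    have hDT : 0 < 1 + m * Real.sqrt a * T := hD T hT0
    have hlin : ∀ s : ℝ, HasDerivAt (fun t => 1 + m * Real.sqrt a * t)
        (m * Real.sqrt a) s := by
      intro s
      simpa using ((hasDerivAt_id s).const_mul (m * Real.sqrt a)).const_add 1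
    have hden : HasDerivAt (fun t => (1 + m * Real.sqrt a * t) ^ 2)
        (2 * (1 + m * Real.sqrt a * T) * (m * Real.sqrt a)) T := by
      simpa [mul_comm, mul_assoc, mul_left_comm] using (hlin T).fun_pow 2
    have hφT : HasDerivAt φ
        (-(a * (2 * (1 + m * Real.sqrt a * T) * (m * Real.sqrt a))) /
          ((1 + m * Real.sqrt a * T) ^ 2) ^ 2) T := by
      simpa [hφ] using (hasDerivAt_const T a).fun_div hden (by positivity)
    -- φ T ≤ x T
    have hφcont : ContinuousAt φ T := hφT.differentiableAt.continuousAt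
    have hTS : φ T ≤ x T := by
      refine le_of_tendsto_of_tendsto (hφcont.tendsto.comp hu_tendsto)
        ((hx.continuous.continuousAt.tendsto).comp hu_tendsto) ?_
      exact Eventually.of_forall fun n => (hu_mem n).2
    -- T > 0
    have hTpos : 0 < T := by
      rcases hT0.lt_or_eq with h | h
      · exact h
      · exfalso
        have hφ0 : φ 0 = a := by simp [hφ]
        rw [← h, hφ0, h0] at hTS
        linarith
    -- strict inequality before T
    have hbefore : ∀ s : ℝ, 0 ≤ s → s < T → x s < φ s := by
      intro s hs hsT
      by_contra hc
      push_neg at hc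
      exact (notMem_of_lt_csInf hsT hSbdd) ⟨hs, hc⟩
    -- derivative of h = x - φ at T is nonneg, via left slopes
    have hh : HasDerivAt (fun s => x s - φ s)
        (deriv x T - (-(a * (2 * (1 + m * Real.sqrt a * T) * (m * Real.sqrt a))) /
          ((1 + m * Real.sqrt a * T) ^ 2) ^ 2)) T :=
      ((hx T).hasDerivAt).sub hφT
    have hslope : Tendsto (slope (fun s => x s - φ s) T) (𝓝[<] T)
        (𝓝 (deriv x T - (-(a * (2 * (1 + m * Real.sqrt a * T) * (m * Real.sqrt a))) /
          ((1 + m * Real.sqrt a * T) ^ 2) ^ 2))) :=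
      (hasDerivAt_iff_tendsto_slope.mp hh).mono_left
        (nhdsWithin_mono _ fun y hy => ne_of_lt hy)
    have hnonneg : 0 ≤ deriv x T - (-(a * (2 * (1 + m * Real.sqrt a * T) * (m * Real.sqrt a))) /
        ((1 + m * Real.sqrt a * T) ^ 2) ^ 2) := by
      refine ge_of_tendsto hslope ?_
      filter_upwards [Ioo_mem_nhdsLT_of_mem (⟨hTpos, le_refl T⟩ : T ∈ Set.Ioc 0 T)]
        with s hs
      have hxs : x s < φ s := hbefore s hs.1.le hs.2
      have hnum : (x s - φ s) - (x T - φ T) < 0 := by linarith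
      have hden' : s - T < 0 := by linarith [hs.2]
      rw [slope_def_field]
      rw [div_nonneg_iff]
      right
      constructor
      · linarith
      · linarith
    -- contradiction: derivative is in fact negative
    have hφTval : φ T = a / (1 + m * Real.sqrt a * T) ^ 2 := rfl
    have hφTpos : 0 < φ T := by rw [hφTval]; positivity
    have hrpow : φ T ^ ((3 : ℝ) / 2) =
        a * Real.sqrt a / (1 + m * Real.sqrt a * T) ^ 3 := by
      rw [hφTval, phi_rpow_aux a _ ha hDT]
    have hmono : φ T ^ ((3 : ℝ) / 2) ≤ x T ^ ((3 : ℝ) / 2) :=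
      Real.rpow_le_rpow hφTpos.le hTS (by norm_num)
    have hdx : deriv x T ≤ -2 * μ * (a * Real.sqrt a / (1 + m * Real.sqrt a * T) ^ 3) := by
      calc deriv x T ≤ -2 * μ * x T ^ ((3 : ℝ) / 2) := hdec T hT0
        _ ≤ -2 * μ * φ T ^ ((3 : ℝ) / 2) := by nlinarith
        _ = _ := by rw [hrpow]
    have hval : -(a * (2 * (1 + m * Real.sqrt a * T) * (m * Real.sqrt a))) /
        ((1 + m * Real.sqrt a * T) ^ 2) ^ 2 =
        -2 * m * (a * Real.sqrt a / (1 + m * Real.sqrt a * T) ^ 3) := by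
      field_simp
    rw [hval] at hnonneg
    have hq : 0 < a * Real.sqrt a / (1 + m * Real.sqrt a * T) ^ 3 := by positivity
    nlinarith
  -- Pass to the limit.
  have main : ∀ t : ℝ, 0 ≤ t → x t ≤ x₀ / (1 + μ * Real.sqrt x₀ * t) ^ 2 := by
    intro t ht
    have hsx : 0 ≤ Real.sqrt x₀ := Real.sqrt_nonneg _
    have hDpos : 0 < 1 + μ * Real.sqrt x₀ * t := by
      have := mul_nonneg (mul_nonneg hμ.le hsx) ht
      linarith
    set F : ℝ → ℝ := fun ε => (x₀ + ε) / (1 + (μ - ε) * Real.sqrt (x₀ + ε) * t) ^ 2 with hF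
    have hFcont : ContinuousAt F 0 := by
      apply ContinuousAt.div
      · fun_prop
      · fun_prop
      · simpa using (by positivity : (1 + μ * Real.sqrt x₀ * t) ^ 2 ≠ 0)
    have hF0 : F 0 = x₀ / (1 + μ * Real.sqrt x₀ * t) ^ 2 := by simp [hF]
    have htend : Tendsto F (𝓝[>] (0 : ℝ)) (𝓝 (x₀ / (1 + μ * Real.sqrt x₀ * t) ^ 2)) := by
      rw [← hF0]
      exact hFcont.continuousWithinAt.tendsto
    refine ge_of_tendsto htend ?_
    filter_upwards [Ioo_mem_nhdsGT_of_mem (⟨le_refl (0:ℝ), hμ⟩ : (0:ℝ) ∈ Set.Ico 0 μ)]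
      with ε hε
    exact (key (x₀ + ε) (μ - ε) (by linarith [hε.1]) (by linarith [hε.2])
      (by linarith [hε.1]) t ht).le
  refine ⟨main, fun t ht => ?_⟩
  have h1 : x t ≤ x₀ / (1 + μ * Real.sqrt x₀ * t) ^ 2 := main t ht.le
  have hsx : 0 < Real.sqrt x₀ := Real.sqrt_pos.mpr hx₀
  have hμt : 0 < μ * t := by positivity
  have hrw : (μ * t) ^ (-2 : ℝ) = ((μ * t) ^ 2)⁻¹ := by
    rw [show (-2 : ℝ) = -(2:ℕ) by norm_num, Real.rpow_neg hμt.le, Real.rpow_natCast]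
  rw [hrw]
  have hsq : Real.sqrt x₀ ^ 2 = x₀ := Real.sq_sqrt hx₀.le
  have hle : x₀ / (1 + μ * Real.sqrt x₀ * t) ^ 2 ≤ ((μ * t) ^ 2)⁻¹ := by
    rw [show ((μ * t) ^ 2)⁻¹ = 1 / (μ * t) ^ 2 from (one_div _).symm,
      div_le_div_iff₀ (by positivity) (by positivity)]
    nlinarith [hsq, mul_pos (mul_pos hμ hsx) ht]
  linarith
end
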